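/- Let H=(S,E(S)) be a finite simple graph and δ ∈ (0,1/2). Then the quantity w(H) := Σ over spanning trees T of H of (1/2+δ)^{-|S|}·(−1)^{|T|}·∫_{[0,1/2+δ]^S} ∏_{uv∈T} 1[x_u+x_v>1] · ∏_{st∈E_T} 1[x_s+x_t≤1] dx does not depend on the total order on the edges of H that is used to define the broken edge sets E_T. -/

import Mathlib

open MeasureTheory

attribute [local instance] Classical.propDecidable

namespace VolumePaper

variable {V : Type} [Fintype V]

/-- The set of endpoints of a finite set of (potential) edges. -/
noncomputable def verts (T : Finset (Sym2 V)) : Finset V :=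
  Finset.univ.filter (fun v => ∃ e ∈ T, v ∈ e)

/-- `T` forms a tree (necessarily with at least one edge): the graph on the set of
endpoints of `T` whose edges are the members of `T` is a tree. -/
def IsTreeSet (T : Finset (Sym2 V)) : Prop :=
  (SimpleGraph.induce (↑(verts T) : Set V)
    (SimpleGraph.fromEdgeSet (↑T : Set (Sym2 V)))).IsTree

/-- The broken edges of `T` relative to the induced subgraph `G[S]` and a fixed
total edge order (given by an injective function `ord` into `ℕ`): edges `e` of `G[S]`
not in `T` such that `e` is the largest edge of a (the) cycle of `T ∪ {e}`. -/
noncomputable def brokenEdgesOn (G : SimpleGraph V) (ord : Sym2 V → ℕ) (S : Finset V)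
    (T : Finset (Sym2 V)) : Finset (Sym2 V) :=
  Finset.univ.filter (fun e =>
    e ∈ G.edgeSet ∧ (∀ v ∈ e, v ∈ S) ∧ e ∉ T ∧
    ∃ (u : V) (c : (SimpleGraph.fromEdgeSet (insert e (↑T : Set (Sym2 V)))).Walk u u),
      c.IsCycle ∧ e ∈ c.edges ∧ ∀ e' ∈ c.edges, ord e' ≤ ord e)

/-- The broken edges of a tree `T`, relative to the graph induced by `G` on the
endpoints of `T`. -/
noncomputable def brokenEdges (G : SimpleGraph V) (ord : Sym2 V → ℕ)
    (T : Finset (Sym2 V)) : Finset (Sym2 V) :=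
  brokenEdgesOn G ord (verts T) T

/-- Indicator (as a real number) of the event `x_u + x_v > 1` on an unordered pair. -/
noncomputable def indGt (x : V → ℝ) : Sym2 V → ℝ :=
  Sym2.lift ⟨fun u v => if 1 < x u + x v then 1 else 0, by intro a b; dsimp only; rw [add_comm]⟩

/-- Indicator (as a real number) of the event `x_u + x_v ≤ 1` on an unordered pair. -/
noncomputable def indLe (x : V → ℝ) : Sym2 V → ℝ :=
  Sym2.lift ⟨fun u v => if x u + x v ≤ 1 then 1 else 0, by intro a b; dsimp only; rw [add_comm]⟩

/-- Extension of a function on a finite subset of coordinates by `0`. -/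
noncomputable def extFun (S : Finset V) (x : {v // v ∈ S} → ℝ) : V → ℝ :=
  fun v => if h : v ∈ S then x ⟨v, h⟩ else 0

/-- The integral `∫_{[0,1/2+δ]^S} ∏_{uv ∈ T} 1[x_u+x_v>1] ∏_{st ∈ E_T} 1[x_s+x_t ≤ 1] dμ`,
where `E_T` is the set of broken edges of `T` relative to `G[S]`. -/
noncomputable def treeIntegral (G : SimpleGraph V) (ord : Sym2 V → ℕ) (δ : ℝ)
    (S : Finset V) (T : Finset (Sym2 V)) : ℝ :=
  ∫ x : {v // v ∈ S} → ℝ in Set.univ.pi (fun _ => Set.Icc (0:ℝ) (1/2 + δ)),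
    (∏ e ∈ T, indGt (extFun S x) e) * ∏ e ∈ brokenEdgesOn G ord S T, indLe (extFun S x) e

/-- The weight `w_T` of a tree `T` of edges of `G`. -/
noncomputable def treeWeight (G : SimpleGraph V) (ord : Sym2 V → ℕ) (δ : ℝ)
    (T : Finset (Sym2 V)) : ℝ :=
  (1/2 + δ) ^ (-((verts T).card : ℤ)) * (-1 : ℝ) ^ T.card *
    treeIntegral G ord δ (verts T) T

/-- The connected components (each having at least one edge) of a set `F` of edges. -/
noncomputable def comps (F : Finset (Sym2 V)) : Finset (Finset (Sym2 V)) :=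
  F.image (fun e => F.filter (fun e' => ∃ u ∈ e, ∃ v ∈ e',
    (SimpleGraph.fromEdgeSet (↑F : Set (Sym2 V))).Reachable u v))

/-- `F` is a forest of edges of `G` all of whose endpoints lie in `S`. -/
def IsForestOn (G : SimpleGraph V) (S : Finset V) (F : Finset (Sym2 V)) : Prop :=
  (↑F : Set (Sym2 V)) ⊆ G.edgeSet ∧ (∀ e ∈ F, ∀ v ∈ e, v ∈ S) ∧
    (SimpleGraph.fromEdgeSet (↑F : Set (Sym2 V))).IsAcyclic

/-- The polynomial `p_{G[S],δ}(x) = ∑_{F forest of G[S]} (∏_{T comp. of F} w_T) x^{|F|}`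
(with weights computed in `G`). -/
noncomputable def pPolyOn (G : SimpleGraph V) (ord : Sym2 V → ℕ) (δ : ℝ) (S : Finset V) :
    Polynomial ℂ :=
  ∑ F ∈ Finset.univ.filter (fun F => IsForestOn G S F),
    Polynomial.monomial F.card (((∏ T ∈ comps F, treeWeight G ord δ T : ℝ)) : ℂ)

/-- The polynomial `p_{G,δ}`. -/
noncomputable def pPoly (G : SimpleGraph V) (ord : Sym2 V → ℕ) (δ : ℝ) : Polynomial ℂ :=
  pPolyOn G ord δ Finset.univ

/-- `T` is (the edge set of) a spanning tree of the induced subgraph `G[S]`. -/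
def IsSpanningTreeOn (G : SimpleGraph V) (S : Finset V) (T : Finset (Sym2 V)) : Prop :=
  (↑T : Set (Sym2 V)) ⊆ G.edgeSet ∧ (∀ e ∈ T, ∀ v ∈ e, v ∈ S) ∧
    (SimpleGraph.induce (↑S : Set V)
      (SimpleGraph.fromEdgeSet (↑T : Set (Sym2 V)))).IsTree

/-- The weight `w(G[S])` of the subgraph of `G` induced by `S`. -/
noncomputable def indWeight (G : SimpleGraph V) (ord : Sym2 V → ℕ) (δ : ℝ)
    (S : Finset V) : ℝ :=
  ∑ T ∈ Finset.univ.filter (fun T => IsSpanningTreeOn G S T),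
    (1/2 + δ) ^ (-(S.card : ℤ)) * (-1 : ℝ) ^ T.card * treeIntegral G ord δ S T

/-- `G` has maximum degree at most `Δ`. -/
def maxDegreeLE (G : SimpleGraph V) (Δ : ℝ) : Prop :=
  ∀ v : V, ((Finset.univ.filter (fun u => G.Adj v u)).card : ℝ) ≤ Δ

/-- The truncated relaxed independent set polytope `P_{G,δ}`. -/
def polytope (G : SimpleGraph V) (δ : ℝ) : Set (V → ℝ) :=
  {x | (∀ v, x v ∈ Set.Icc (0:ℝ) (1/2 + δ)) ∧ ∀ ⦃u v⦄, G.Adj u v → x u + x v ≤ 1}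


section Statement7Aux
set_option linter.unusedSectionVars false

open SimpleGraph Finset

variable {V : Type} [Fintype V] {ord : Sym2 V → ℕ} {A B T : Finset (Sym2 V)} {e : Sym2 V}

/-- The graph with edge set a finite set of (potential) edges. -/
noncomputable abbrev gr (F : Finset (Sym2 V)) : SimpleGraph V :=
  SimpleGraph.fromEdgeSet (↑F : Set (Sym2 V))

lemma sym2_exists_rep (e : Sym2 V) : ∃ x y : V, e = s(x, y) :=
  Sym2.ind (fun x y => ⟨x, y, rfl⟩) e

lemma reachable_transfer {G G' : SimpleGraph V}
    (h : ∀ a b : V, G.Adj a b → G'.Reachable a b) {u v : V} (huv : G.Reachable u v) :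
    G'.Reachable u v := by
  obtain ⟨w⟩ := huv
  induction w with
  | nil => exact SimpleGraph.Reachable.refl _
  | cons ha _ ih => exact (h _ _ ha).trans ih

/-- Edges of `A` below `e` in the order. -/
noncomputable def below (ord : Sym2 V → ℕ) (A : Finset (Sym2 V)) (e : Sym2 V) :
    Finset (Sym2 V) := A.filter (fun e' => ord e' < ord e)

/-- The Kruskal (minimal spanning) forest of `A`. -/
noncomputable def kr (ord : Sym2 V → ℕ) (A : Finset (Sym2 V)) : Finset (Sym2 V) :=
  A.filter (fun e => ∀ u v : V, e = s(u, v) → ¬ (gr (below ord A e)).Reachable u v)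

lemma kr_subset : kr ord A ⊆ A := Finset.filter_subset _ _

lemma not_reach_of_mem_kr (he : e ∈ kr ord A) {u v : V} (hrep : e = s(u, v)) :
    ¬ (gr (below ord A e)).Reachable u v :=
  (Finset.mem_filter.1 he).2 u v hrep

lemma reach_of_not_mem_kr (heA : e ∈ A) (he : e ∉ kr ord A) {u v : V} (hrep : e = s(u, v)) :
    (gr (below ord A e)).Reachable u v := by
  rw [kr, Finset.mem_filter] at he
  push_neg at he
  obtain ⟨a, b, hab, hr⟩ := he heA
  rw [hrep, Sym2.eq_iff] at hab
  rcases hab with ⟨rfl, rfl⟩ | ⟨rfl, rfl⟩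
  · exact hr
  · exact hr.symm

lemma kr_reach (hA : ∀ e ∈ A, ¬ e.IsDiag) :
    ∀ n : ℕ, ∀ e ∈ A, ord e ≤ n → ∀ u v : V, e = s(u, v) →
      (gr ((kr ord A).filter (fun e' => ord e' ≤ ord e))).Reachable u v := by
  intro n
  induction n using Nat.strong_induction_on with
  | _ n ih =>
    intro e heA hn u v hrep
    have hne : u ≠ v := by
      intro h
      exact hA e heA (by rw [hrep, h]; exact Sym2.mk_isDiag_iff.2 rfl)
    by_cases hk : e ∈ kr ord A
    · refine SimpleGraph.Adj.reachable ?_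
      rw [SimpleGraph.fromEdgeSet_adj]
      refine ⟨?_, hne⟩
      rw [Finset.mem_coe, Finset.mem_filter, ← hrep]
      exact ⟨hk, le_rfl⟩
    · have hr := reach_of_not_mem_kr heA hk hrep
      refine reachable_transfer (fun a b hab => ?_) hr
      rw [SimpleGraph.fromEdgeSet_adj] at hab
      obtain ⟨hmem, hne'⟩ := hab
      rw [Finset.mem_coe, below, Finset.mem_filter] at hmem
      obtain ⟨hA', hlt⟩ := hmem
      have h1 : ord s(a, b) < n := lt_of_lt_of_le hlt hn
      have h2 := ih (ord s(a, b)) h1 s(a, b) hA' le_rfl a b rfl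
      refine h2.mono (SimpleGraph.fromEdgeSet_mono ?_)
      refine Finset.coe_subset.2 (Finset.monotone_filter_right _ ?_)
      intro e' _ he'
      exact le_trans he' hlt.le

lemma kr_reach' (hA : ∀ e ∈ A, ¬ e.IsDiag) (heA : e ∈ A) {u v : V} (hrep : e = s(u, v)) :
    (gr (kr ord A)).Reachable u v := by
  refine (kr_reach hA (ord e) e heA le_rfl u v hrep).mono (SimpleGraph.fromEdgeSet_mono ?_)
  exact Finset.coe_subset.2 (Finset.filter_subset _ _)

lemma kr_connected (hA : ∀ e ∈ A, ¬ e.IsDiag) (h : (gr A).Connected) :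
    (gr (kr ord A)).Connected := by
  rw [SimpleGraph.connected_iff]
  refine ⟨fun u v => ?_, h.nonempty⟩
  refine reachable_transfer (fun a b hab => ?_) (h.preconnected u v)
  rw [SimpleGraph.fromEdgeSet_adj, Finset.mem_coe] at hab
  exact kr_reach' hA hab.1 rfl

end Statement7Aux
section Statement7Aux2
set_option linter.unusedSectionVars false

open SimpleGraph Finset

variable {V : Type} [Fintype V] {ord : Sym2 V → ℕ} {A B T : Finset (Sym2 V)} {e : Sym2 V}
  {H : SimpleGraph V}

lemma kr_acyclic (hinj : Function.Injective ord) : (gr (kr ord A)).IsAcyclic := by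
  intro v c hc
  have hsub : ∀ e' ∈ c.edges, e' ∈ kr ord A ∧ ¬ e'.IsDiag := by
    intro e' h
    have h2 := c.edges_subset_edgeSet h
    rw [SimpleGraph.edgeSet_fromEdgeSet] at h2
    exact ⟨by exact_mod_cast h2.1, h2.2⟩
  have hne : c.edges.toFinset.Nonempty := by
    have h3 := hc.three_le_length
    have h4 : c.edges ≠ [] := by
      intro h; rw [← c.length_edges, h] at h3; simp at h3
    obtain ⟨e', he'⟩ := List.exists_mem_of_ne_nil _ h4
    exact ⟨e', List.mem_toFinset.2 he'⟩
  obtain ⟨e, heF, hmax⟩ := Finset.exists_max_image c.edges.toFinset ord hne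
  have hec : e ∈ c.edges := List.mem_toFinset.1 heF
  obtain ⟨x, y, hxy⟩ := sym2_exists_rep e
  have hedges : ∀ e' ∈ c.edges, e' ∈ (gr c.edges.toFinset).edgeSet := by
    intro e' h
    rw [SimpleGraph.edgeSet_fromEdgeSet]
    exact ⟨by simpa using List.mem_toFinset.2 h, (hsub e' h).2⟩
  have hc' := hc.transfer hedges
  have hbridge := (SimpleGraph.adj_and_reachable_delete_edges_iff_exists_cycle
    (G := gr c.edges.toFinset) (v := x) (w := y)).2
    ⟨v, c.transfer _ hedges, hc', by rw [SimpleGraph.Walk.edges_transfer, ← hxy]; exact hec⟩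
  refine not_reach_of_mem_kr (hsub e hec).1 hxy (hbridge.2.mono ?_)
  intro a b hab
  rw [SimpleGraph.deleteEdges, SimpleGraph.sdiff_adj, SimpleGraph.fromEdgeSet_adj, SimpleGraph.fromEdgeSet_adj] at hab
  obtain ⟨⟨hab1, hab2⟩, hab3⟩ := hab
  have habne : s(a, b) ≠ e := by
    intro h
    exact hab3 ⟨by rw [h, hxy]; rfl, hab2⟩
  have habc : s(a, b) ∈ c.edges := by simpa using hab1
  have hablt : ord s(a, b) < ord e :=
    lt_of_le_of_ne (hmax _ (List.mem_toFinset.2 habc)) (fun h => habne (hinj h))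
  rw [SimpleGraph.fromEdgeSet_adj]
  refine ⟨?_, hab2⟩
  rw [Finset.mem_coe, below, Finset.mem_filter]
  exact ⟨kr_subset (hsub _ habc).1, hablt⟩

/-- Extract a "reach below" statement from a broken edge's cycle. -/
lemma broken_reach (hinj : Function.Injective ord)
    (he : e ∈ brokenEdgesOn H ord Finset.univ T) {u v : V} (hrep : e = s(u, v)) :
    (gr (T.filter (fun e' => ord e' < ord e))).Reachable u v := by
  rw [brokenEdgesOn, Finset.mem_filter] at he
  obtain ⟨-, heE, -, heT, w₀, c, hc, hece, hbound⟩ := he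
  have hedges : ∀ e' ∈ c.edges, e' ∈ (gr c.edges.toFinset).edgeSet := by
    intro e' h
    have h2 := c.edges_subset_edgeSet h
    rw [SimpleGraph.edgeSet_fromEdgeSet] at h2
    rw [SimpleGraph.edgeSet_fromEdgeSet]
    exact ⟨by simpa using List.mem_toFinset.2 h, h2.2⟩
  have hc' := hc.transfer hedges
  have hbridge := (SimpleGraph.adj_and_reachable_delete_edges_iff_exists_cycle
    (G := gr c.edges.toFinset) (v := u) (w := v)).2
    ⟨w₀, c.transfer _ hedges, hc', by rw [SimpleGraph.Walk.edges_transfer, ← hrep]; exact hece⟩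
  refine hbridge.2.mono ?_
  intro a b hab
  rw [SimpleGraph.deleteEdges, SimpleGraph.sdiff_adj, SimpleGraph.fromEdgeSet_adj, SimpleGraph.fromEdgeSet_adj] at hab
  obtain ⟨⟨hab1, hab2⟩, hab3⟩ := hab
  have habne : s(a, b) ≠ e := by
    intro h
    exact hab3 ⟨by rw [h, hrep]; rfl, hab2⟩
  have habc : s(a, b) ∈ c.edges := by simpa using hab1
  have habT : s(a, b) ∈ T := by
    have h2 := c.edges_subset_edgeSet habc
    rw [SimpleGraph.edgeSet_fromEdgeSet] at h2
    rcases Set.mem_insert_iff.1 h2.1 with h | h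
    · exact absurd h habne
    · exact_mod_cast h
  have hablt : ord s(a, b) < ord e :=
    lt_of_le_of_ne (hbound _ habc) (fun h => habne (hinj h))
  rw [SimpleGraph.fromEdgeSet_adj]
  exact ⟨by rw [Finset.mem_coe, Finset.mem_filter]; exact ⟨habT, hablt⟩, hab2⟩

lemma broken_spec (he : e ∈ brokenEdgesOn H ord Finset.univ T) :
    e ∈ H.edgeSet ∧ e ∉ T := by
  rw [brokenEdgesOn, Finset.mem_filter] at he
  exact ⟨he.2.1, he.2.2.2.1⟩

/-- Every edge of `A` deleted by Kruskal is a broken edge of the Kruskal tree. -/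
lemma sdiff_kr_broken (hinj : Function.Injective ord) (hAE : ↑A ⊆ H.edgeSet) :
    ∀ e ∈ A \ kr ord A, e ∈ brokenEdgesOn H ord Finset.univ (kr ord A) := by
  intro e he
  rw [Finset.mem_sdiff] at he
  obtain ⟨heA, hek⟩ := he
  obtain ⟨x, y, hxy⟩ := sym2_exists_rep e
  have heE : e ∈ H.edgeSet := hAE heA
  have hnd : ∀ e' ∈ A, ¬ e'.IsDiag := fun e' h' => H.not_isDiag_of_mem_edgeSet (hAE h')
  have hne : x ≠ y := by
    intro h
    exact (hnd e heA) (by rw [hxy, h]; exact Sym2.mk_isDiag_iff.2 rfl)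
  have hr := kr_reach hnd (ord e) e heA le_rfl x y hxy
  have hfil : (kr ord A).filter (fun e' => ord e' ≤ ord e)
      = (kr ord A).filter (fun e' => ord e' < ord e) := by
    apply Finset.filter_congr
    intro e' he'
    have hne' : e' ≠ e := fun h => hek (h ▸ he')
    constructor
    · exact fun h => lt_of_le_of_ne h (fun h2 => hne' (hinj h2))
    · exact le_of_lt
  rw [hfil] at hr
  obtain ⟨w⟩ := hr
  set T := kr ord A with hT
  have hpe : ∀ e' ∈ (w.toPath : (gr (T.filter (fun e' => ord e' < ord e))).Walk x y).edges,
      e' ∈ (SimpleGraph.fromEdgeSet (insert e (↑T : Set (Sym2 V)))).edgeSet := by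
    intro e' h'
    have h2 := SimpleGraph.Walk.edges_subset_edgeSet _ h'
    rw [SimpleGraph.edgeSet_fromEdgeSet] at h2 ⊢
    refine ⟨Set.mem_insert_iff.2 (Or.inr ?_), h2.2⟩
    have := h2.1
    rw [Finset.mem_coe, Finset.mem_filter] at this
    exact this.1
  have hedge_lt : ∀ e' ∈ (w.toPath : (gr (T.filter (fun e' => ord e' < ord e))).Walk x y).edges,
      ord e' < ord e := by
    intro e' h'
    have h2 := SimpleGraph.Walk.edges_subset_edgeSet _ h'
    rw [SimpleGraph.edgeSet_fromEdgeSet] at h2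
    have := h2.1
    rw [Finset.mem_coe, Finset.mem_filter] at this
    exact this.2
  set p' := ((w.toPath : (gr (T.filter (fun e' => ord e' < ord e))).Walk x y).transfer _ hpe)
    with hp'def
  have hp' : p'.IsPath := (w.toPath.2).transfer hpe
  have hAdj : (SimpleGraph.fromEdgeSet (insert e (↑T : Set (Sym2 V)))).Adj y x := by
    rw [SimpleGraph.fromEdgeSet_adj]
    exact ⟨Set.mem_insert_iff.2 (Or.inl (by rw [hxy]; exact Sym2.eq_swap.symm ▸ rfl)), hne.symm⟩
  have hns : s(y, x) ∉ p'.edges := by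
    rw [hp'def, SimpleGraph.Walk.edges_transfer]
    intro h
    have := hedge_lt _ h
    rw [Sym2.eq_swap, ← hxy] at this
    exact lt_irrefl _ this
  have hcyc := SimpleGraph.Path.cons_isCycle ⟨p', hp'⟩ hAdj hns
  rw [brokenEdgesOn, Finset.mem_filter]
  refine ⟨Finset.mem_univ _, heE, fun v _ => Finset.mem_univ v, hek, y, SimpleGraph.Walk.cons hAdj p', hcyc, ?_, ?_⟩
  · rw [SimpleGraph.Walk.edges_cons]
    exact List.mem_cons.2 (Or.inl (by rw [hxy]; exact Sym2.eq_swap.symm))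
  · intro e' h'
    rw [SimpleGraph.Walk.edges_cons, List.mem_cons] at h'
    rcases h' with h' | h'
    · rw [h', Sym2.eq_swap, ← hxy]
    · rw [hp'def, SimpleGraph.Walk.edges_transfer] at h'
      exact (hedge_lt _ h').le

end Statement7Aux2
section Statement7Aux3
set_option linter.unusedSectionVars false

open SimpleGraph Finset

variable {V : Type} [Fintype V] {ord : Sym2 V → ℕ} {A B T : Finset (Sym2 V)} {e : Sym2 V}
  {H : SimpleGraph V}

lemma isAcyclic_of_iso {W : Type} {G : SimpleGraph V} {G' : SimpleGraph W} (φ : G ≃g G')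
    (h : G'.IsAcyclic) : G.IsAcyclic := fun _v c hc =>
  h (c.map φ.toHom) ((SimpleGraph.Walk.map_isCycle_iff_of_injective φ.injective).2 hc)

lemma isSpanningTreeOn_univ_iff :
    IsSpanningTreeOn H Finset.univ T ↔
      ↑T ⊆ H.edgeSet ∧ (gr T).Connected ∧ (gr T).IsAcyclic := by
  rw [IsSpanningTreeOn]
  have h1 : (SimpleGraph.induce (↑(Finset.univ : Finset V) : Set V) (gr T)).IsTree ↔
      (gr T).Connected ∧ (gr T).IsAcyclic := by
    rw [Finset.coe_univ, SimpleGraph.isTree_iff]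
    constructor
    · rintro ⟨ha, hb⟩
      exact ⟨(SimpleGraph.Iso.connected_iff (SimpleGraph.induceUnivIso (gr T))).1 ha,
        isAcyclic_of_iso (SimpleGraph.induceUnivIso (gr T)).symm hb⟩
    · rintro ⟨ha, hb⟩
      exact ⟨(SimpleGraph.Iso.connected_iff (SimpleGraph.induceUnivIso (gr T))).2 ha,
        isAcyclic_of_iso (SimpleGraph.induceUnivIso (gr T)) hb⟩
  rw [h1]
  simp only [Finset.mem_univ, imp_true_iff, true_and]

lemma kr_spanning (hinj : Function.Injective ord) (hAE : ↑A ⊆ H.edgeSet)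
    (hAc : (gr A).Connected) : IsSpanningTreeOn H Finset.univ (kr ord A) :=
  isSpanningTreeOn_univ_iff.2 ⟨fun e he => hAE (kr_subset (by exact_mod_cast he)),
    kr_connected (fun e h => H.not_isDiag_of_mem_edgeSet (hAE (Finset.mem_coe.2 h))) hAc,
    kr_acyclic hinj⟩

lemma kr_union (hinj : Function.Injective ord) (hTE : ↑T ⊆ H.edgeSet)
    (hTc : (gr T).Connected) (hTa : (gr T).IsAcyclic)
    (hB : B ⊆ brokenEdgesOn H ord Finset.univ T) :
    kr ord (T ∪ B) = T := by
  ext e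
  constructor
  · intro hek
    have heA : e ∈ T ∪ B := kr_subset hek
    rcases Finset.mem_union.1 heA with h | h
    · exact h
    · exfalso
      obtain ⟨x, y, hxy⟩ := sym2_exists_rep e
      have hr := broken_reach hinj (hB h) hxy
      refine not_reach_of_mem_kr hek hxy (hr.mono (SimpleGraph.fromEdgeSet_mono ?_))
      refine Finset.coe_subset.2 ?_
      intro e' he'
      rw [Finset.mem_filter] at he'
      rw [below, Finset.mem_filter]
      exact ⟨Finset.mem_union_left _ he'.1, he'.2⟩
  · intro heT
    have heA : e ∈ T ∪ B := Finset.mem_union_left _ heT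
    by_contra hek
    obtain ⟨x, y, hxy⟩ := sym2_exists_rep e
    have hne : x ≠ y := by
      intro h
      exact H.not_isDiag_of_mem_edgeSet (hTE heT)
        (by rw [hxy, h]; exact Sym2.mk_isDiag_iff.2 rfl)
    have hr := reach_of_not_mem_kr heA hek hxy
    have key : ∀ e'' ∈ T, ord e'' < ord e → ∀ a b : V, e'' = s(a, b) → a ≠ b →
        ((gr T) \ SimpleGraph.fromEdgeSet {s(x, y)}).Adj a b := by
      intro e'' h1 h2 a' b' hrep hne''
      rw [SimpleGraph.sdiff_adj, SimpleGraph.fromEdgeSet_adj, SimpleGraph.fromEdgeSet_adj]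
      refine ⟨⟨by rw [← hrep]; exact_mod_cast h1, hne''⟩, ?_⟩
      rintro ⟨hm, -⟩
      rw [Set.mem_singleton_iff] at hm
      rw [hrep, hm, ← hxy] at h2
      exact lt_irrefl _ h2
    have hr' : ((gr T) \ SimpleGraph.fromEdgeSet {s(x, y)}).Reachable x y := by
      refine reachable_transfer (fun a b hab => ?_) hr
      rw [SimpleGraph.fromEdgeSet_adj] at hab
      obtain ⟨hmem, hne'⟩ := hab
      rw [Finset.mem_coe, below, Finset.mem_filter] at hmem
      obtain ⟨hmem, hlt⟩ := hmem
      rcases Finset.mem_union.1 hmem with hT' | hB'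
      · exact (key s(a, b) hT' hlt a b rfl hne').reachable
      · have hr2 := broken_reach hinj (hB hB') (rfl : s(a, b) = s(a, b))
        refine SimpleGraph.Reachable.mono (fun a' b' hab' => ?_) hr2
        rw [SimpleGraph.fromEdgeSet_adj] at hab'
        obtain ⟨hm', hne''⟩ := hab'
        rw [Finset.mem_coe, Finset.mem_filter] at hm'
        exact key _ hm'.1 (hm'.2.trans hlt) a' b' rfl hne''
    have hadj : (gr T).Adj x y :=
      (SimpleGraph.fromEdgeSet_adj _).2 ⟨by rw [← hxy]; exact_mod_cast heT, hne⟩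
    obtain ⟨u, p, hp, -⟩ :=
      SimpleGraph.adj_and_reachable_delete_edges_iff_exists_cycle.1 ⟨hadj, hr'⟩
    exact hTa p hp

lemma prod_one_sub (f : Sym2 V → ℝ) (s : Finset (Sym2 V)) :
    ∏ e ∈ s, (1 - f e) = ∑ B ∈ s.powerset, (-1 : ℝ) ^ B.card * ∏ e ∈ B, f e := by
  have h : ∀ e ∈ s, (1 - f e) = (-f e + 1) := by intro e _; ring
  rw [Finset.prod_congr rfl h, Finset.prod_add]
  refine Finset.sum_congr rfl (fun t _ => ?_)
  rw [Finset.prod_const_one, mul_one]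
  calc ∏ i ∈ t, -f i = ∏ i ∈ t, ((-1 : ℝ) * f i) := Finset.prod_congr rfl (fun i _ => by ring)
    _ = (-1 : ℝ) ^ t.card * ∏ i ∈ t, f i := by rw [Finset.prod_mul_distrib, Finset.prod_const]

lemma key_sum (H : SimpleGraph V) (ord : Sym2 V → ℕ) (hinj : Function.Injective ord)
    (f : Sym2 V → ℝ) :
    ∑ T ∈ Finset.univ.filter (fun T => IsSpanningTreeOn H Finset.univ T),
      (-1 : ℝ) ^ T.card *
        ((∏ e ∈ T, f e) * ∏ e ∈ brokenEdgesOn H ord Finset.univ T, (1 - f e))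
    = ∑ A ∈ Finset.univ.filter
        (fun A : Finset (Sym2 V) => ↑A ⊆ H.edgeSet ∧ (gr A).Connected),
      (-1 : ℝ) ^ A.card * ∏ e ∈ A, f e := by
  have step1 : ∀ T ∈ Finset.univ.filter (fun T => IsSpanningTreeOn H Finset.univ T),
      (-1 : ℝ) ^ T.card *
          ((∏ e ∈ T, f e) * ∏ e ∈ brokenEdgesOn H ord Finset.univ T, (1 - f e))
        = ∑ B ∈ (brokenEdgesOn H ord Finset.univ T).powerset,
            (-1 : ℝ) ^ (T.card + B.card) * ((∏ e ∈ T, f e) * ∏ e ∈ B, f e) := by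
    intro T _
    rw [prod_one_sub, Finset.mul_sum, Finset.mul_sum]
    refine Finset.sum_congr rfl (fun B _ => ?_)
    rw [pow_add]
    ring
  rw [Finset.sum_congr rfl step1, Finset.sum_sigma']
  refine Finset.sum_bij' (fun p _ => p.1 ∪ p.2)
    (fun A _ => ⟨kr ord A, A \ kr ord A⟩) ?_ ?_ ?_ ?_ ?_
  · rintro ⟨T, B⟩ hp
    rw [Finset.mem_sigma] at hp
    obtain ⟨hT, hBp⟩ := hp
    have hT' := isSpanningTreeOn_univ_iff.1 (Finset.mem_filter.1 hT).2
    have hBs := Finset.mem_powerset.1 hBp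
    rw [Finset.mem_filter]
    refine ⟨Finset.mem_univ _, ?_, ?_⟩
    · rw [Finset.coe_union]
      refine Set.union_subset hT'.1 (fun e he => ?_)
      exact (broken_spec (hBs (Finset.mem_coe.1 he))).1
    · exact hT'.2.1.mono (SimpleGraph.fromEdgeSet_mono
        (Finset.coe_subset.2 Finset.subset_union_left))
  · intro A hA
    rw [Finset.mem_filter] at hA
    obtain ⟨-, hAE, hAc⟩ := hA
    rw [Finset.mem_sigma]
    constructor
    · exact Finset.mem_filter.2 ⟨Finset.mem_univ _, kr_spanning hinj hAE hAc⟩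
    · exact Finset.mem_powerset.2 (fun e he => sdiff_kr_broken hinj hAE e he)
  · rintro ⟨T, B⟩ hp
    rw [Finset.mem_sigma] at hp
    obtain ⟨hT, hBp⟩ := hp
    have hT' := isSpanningTreeOn_univ_iff.1 (Finset.mem_filter.1 hT).2
    have hBs := Finset.mem_powerset.1 hBp
    have h1 : kr ord (T ∪ B) = T := kr_union hinj hT'.1 hT'.2.1 hT'.2.2 hBs
    have hdisj : Disjoint T B :=
      Finset.disjoint_left.2 (fun e heT heB => (broken_spec (hBs heB)).2 heT)
    have h2 : (T ∪ B) \ T = B := Finset.union_sdiff_cancel_left hdisj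
    simp only [h1, h2]
  · intro A hA
    rw [Finset.mem_filter] at hA
    exact Finset.union_sdiff_of_subset kr_subset
  · rintro ⟨T, B⟩ hp
    rw [Finset.mem_sigma] at hp
    obtain ⟨hT, hBp⟩ := hp
    have hBs := Finset.mem_powerset.1 hBp
    have hdisj : Disjoint T B :=
      Finset.disjoint_left.2 (fun e heT heB => (broken_spec (hBs heB)).2 heT)
    rw [Finset.card_union_of_disjoint hdisj, Finset.prod_union hdisj]
end Statement7Aux3
section Statement7Aux4
set_option linter.unusedSectionVars false

open MeasureTheory SimpleGraph Finset

variable {V : Type} [Fintype V] {S : Finset V}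

lemma indLe_eq_one_sub (x : V → ℝ) (e : Sym2 V) : indLe x e = 1 - indGt x e := by
  induction e using Sym2.ind with
  | _ u v =>
    simp only [indLe, indGt, Sym2.lift_mk]
    split_ifs <;> linarith

lemma indGt_nonneg (x : V → ℝ) (e : Sym2 V) : 0 ≤ indGt x e := by
  induction e using Sym2.ind with
  | _ u v => simp only [indGt, Sym2.lift_mk]; split_ifs <;> norm_num

lemma indGt_le_one (x : V → ℝ) (e : Sym2 V) : indGt x e ≤ 1 := by
  induction e using Sym2.ind with
  | _ u v => simp only [indGt, Sym2.lift_mk]; split_ifs <;> norm_num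

lemma indLe_nonneg (x : V → ℝ) (e : Sym2 V) : 0 ≤ indLe x e := by
  induction e using Sym2.ind with
  | _ u v => simp only [indLe, Sym2.lift_mk]; split_ifs <;> norm_num

lemma indLe_le_one (x : V → ℝ) (e : Sym2 V) : indLe x e ≤ 1 := by
  induction e using Sym2.ind with
  | _ u v => simp only [indLe, Sym2.lift_mk]; split_ifs <;> norm_num

lemma measurable_extFun_apply (u : V) :
    Measurable fun x : ({v // v ∈ S} → ℝ) => extFun S x u := by
  by_cases h : u ∈ S
  · simp only [extFun, dif_pos h]; exact measurable_pi_apply _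
  · simp only [extFun, dif_neg h]; exact measurable_const

lemma measurable_indGt (e : Sym2 V) :
    Measurable fun x : ({v // v ∈ S} → ℝ) => indGt (extFun S x) e := by
  induction e using Sym2.ind with
  | _ u v =>
    simp only [indGt, Sym2.lift_mk]
    exact Measurable.ite (measurableSet_lt measurable_const
      ((measurable_extFun_apply u).add (measurable_extFun_apply v)))
      measurable_const measurable_const

lemma measurable_indLe (e : Sym2 V) :
    Measurable fun x : ({v // v ∈ S} → ℝ) => indLe (extFun S x) e := by
  induction e using Sym2.ind with
  | _ u v =>
    simp only [indLe, Sym2.lift_mk]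
    exact Measurable.ite (measurableSet_le
      ((measurable_extFun_apply u).add (measurable_extFun_apply v)) measurable_const)
      measurable_const measurable_const

lemma finite_box (δ : ℝ) :
    volume (Set.univ.pi fun _ : {v // v ∈ (Finset.univ : Finset V)} =>
      Set.Icc (0 : ℝ) (1 / 2 + δ)) < ⊤ := by
  rw [volume_pi_pi]
  exact ENNReal.prod_lt_top (fun i _ => by simp [Real.volume_Icc])

lemma integrable_term (δ c : ℝ) (T Br : Finset (Sym2 V)) :
    Integrable (fun x : ({v // v ∈ (Finset.univ : Finset V)} → ℝ) =>
        c * ((∏ e ∈ T, indGt (extFun Finset.univ x) e) *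
          ∏ e ∈ Br, indLe (extFun Finset.univ x) e))
      (volume.restrict (Set.univ.pi fun _ => Set.Icc (0 : ℝ) (1 / 2 + δ))) := by
  haveI : IsFiniteMeasure (volume.restrict
      (Set.univ.pi fun _ : {v // v ∈ (Finset.univ : Finset V)} =>
        Set.Icc (0 : ℝ) (1 / 2 + δ))) :=
    ⟨by rw [Measure.restrict_apply_univ]; exact finite_box δ⟩
  have hmeas : Measurable (fun x : ({v // v ∈ (Finset.univ : Finset V)} → ℝ) =>
      c * ((∏ e ∈ T, indGt (extFun Finset.univ x) e) *
        ∏ e ∈ Br, indLe (extFun Finset.univ x) e)) := by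
    apply Measurable.const_mul
    exact (Finset.measurable_prod _ fun e _ => measurable_indGt e).mul
      (Finset.measurable_prod _ fun e _ => measurable_indLe e)
  refine (integrable_const |c|).mono' hmeas.aestronglyMeasurable (ae_of_all _ fun x => ?_)
  have hP0 : 0 ≤ ∏ e ∈ T, indGt (extFun Finset.univ x) e :=
    Finset.prod_nonneg fun e _ => indGt_nonneg _ e
  have hP1 : ∏ e ∈ T, indGt (extFun Finset.univ x) e ≤ 1 :=
    Finset.prod_le_one (fun e _ => indGt_nonneg _ e) (fun e _ => indGt_le_one _ e)
  have hQ0 : 0 ≤ ∏ e ∈ Br, indLe (extFun Finset.univ x) e :=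
    Finset.prod_nonneg fun e _ => indLe_nonneg _ e
  have hQ1 : ∏ e ∈ Br, indLe (extFun Finset.univ x) e ≤ 1 :=
    Finset.prod_le_one (fun e _ => indLe_nonneg _ e) (fun e _ => indLe_le_one _ e)
  rw [norm_mul, Real.norm_eq_abs, Real.norm_eq_abs,
    abs_of_nonneg (mul_nonneg hP0 hQ0)]
  calc |c| * ((∏ e ∈ T, indGt (extFun Finset.univ x) e) *
        ∏ e ∈ Br, indLe (extFun Finset.univ x) e)
      ≤ |c| * 1 := by
        refine mul_le_mul_of_nonneg_left ?_ (abs_nonneg c)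
        exact mul_le_one₀ hP1 hQ0 hQ1
    _ = |c| := mul_one _

lemma sum_treeIntegral_eq (H : SimpleGraph V) (ord : Sym2 V → ℕ)
    (hinj : Function.Injective ord) (δ : ℝ) :
    ∑ T ∈ Finset.univ.filter (fun T => IsSpanningTreeOn H Finset.univ T),
      (-1 : ℝ) ^ T.card * treeIntegral H ord δ Finset.univ T
    = ∫ x : {v // v ∈ (Finset.univ : Finset V)} → ℝ in
        Set.univ.pi (fun _ => Set.Icc (0 : ℝ) (1 / 2 + δ)),
        ∑ A ∈ Finset.univ.filter
          (fun A : Finset (Sym2 V) => ↑A ⊆ H.edgeSet ∧ (gr A).Connected),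
          (-1 : ℝ) ^ A.card * ∏ e ∈ A, indGt (extFun Finset.univ x) e := by
  have h1 : ∀ T ∈ Finset.univ.filter (fun T => IsSpanningTreeOn H Finset.univ T),
      (-1 : ℝ) ^ T.card * treeIntegral H ord δ Finset.univ T
      = ∫ x : {v // v ∈ (Finset.univ : Finset V)} → ℝ in
          Set.univ.pi (fun _ => Set.Icc (0 : ℝ) (1 / 2 + δ)),
          (-1 : ℝ) ^ T.card * ((∏ e ∈ T, indGt (extFun Finset.univ x) e) *
            ∏ e ∈ brokenEdgesOn H ord Finset.univ T, indLe (extFun Finset.univ x) e) := by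
    intro T _
    rw [treeIntegral, MeasureTheory.integral_const_mul]
  rw [Finset.sum_congr rfl h1,
    ← MeasureTheory.integral_finset_sum _ (fun T _ => integrable_term δ _ _ _)]
  have h2 : (fun x : {v // v ∈ (Finset.univ : Finset V)} → ℝ =>
      ∑ T ∈ Finset.univ.filter (fun T => IsSpanningTreeOn H Finset.univ T),
        (-1 : ℝ) ^ T.card * ((∏ e ∈ T, indGt (extFun Finset.univ x) e) *
          ∏ e ∈ brokenEdgesOn H ord Finset.univ T, indLe (extFun Finset.univ x) e))
      = fun x => ∑ A ∈ Finset.univ.filter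
          (fun A : Finset (Sym2 V) => ↑A ⊆ H.edgeSet ∧ (gr A).Connected),
          (-1 : ℝ) ^ A.card * ∏ e ∈ A, indGt (extFun Finset.univ x) e := by
    funext x
    rw [← key_sum H ord hinj (indGt (extFun Finset.univ x))]
    refine Finset.sum_congr rfl (fun T _ => ?_)
    congr 1
    congr 1
    exact Finset.prod_congr rfl (fun e _ => indLe_eq_one_sub _ e)
  rw [h2]

end Statement7Aux4
/-- The weight `w(H)` of a finite simple graph `H` does not depend on
the total order of the edges used to define the broken edge sets `E_T`. -/
theorem statement7 (V : Type) [Fintype V] (H : SimpleGraph V) (δ : ℝ)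
    (hδ : δ ∈ Set.Ioo (0:ℝ) (1/2)) (ord₁ ord₂ : Sym2 V → ℕ)
    (h₁ : Function.Injective ord₁) (h₂ : Function.Injective ord₂) :
    indWeight H ord₁ δ Finset.univ = indWeight H ord₂ δ Finset.univ := by
  have rearr : ∀ ord' : Sym2 V → ℕ,
      indWeight H ord' δ Finset.univ
      = (1 / 2 + δ) ^ (-((Finset.univ : Finset V).card : ℤ)) *
          ∑ T ∈ Finset.univ.filter (fun T => IsSpanningTreeOn H Finset.univ T),
            (-1 : ℝ) ^ T.card * treeIntegral H ord' δ Finset.univ T := by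
    intro ord'
    rw [indWeight, Finset.mul_sum]
    exact Finset.sum_congr rfl (fun T _ => mul_assoc _ _ _)
  rw [rearr ord₁, rearr ord₂, sum_treeIntegral_eq H ord₁ h₁ δ,
    sum_treeIntegral_eq H ord₂ h₂ δ]

end VolumePaper
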